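/- arXiv:1502.01533 — 6 statements merged into one kernel-verified Lean document; each statement's English description precedes it below -/
import Mathlib

section
/- Factorisation into lifting steps (primal case): let H : ℤ × ℤ → ℝ (rows indexed by the first argument, columns by the second) and let k₁, k₂ : ℤ → ℤ be strictly increasing bijections of ℤ with k₁(ℓ) < k₂(ℓ) for all ℓ, such that for every column ℓ: H_{i,ℓ} = 0 unless 2k₁(ℓ) ≤ i ≤ 2k₂(ℓ), and the odd-row entries H_{2k₁(ℓ)+1, ℓ} and H_{2k₂(ℓ)−1, ℓ} are nonzero. Define the even and odd submatrices by (H_e)_{k,ℓ} = H_{2k,ℓ} and (H_o)_{k,ℓ} = H_{2k+1,ℓ}. Then there exist a lower bidiagonal matrix U : ℤ × ℤ → ℝ (i.e., U_{k,m} = 0 unless m ∈ {k−1, k}) and a matrix H_e' : ℤ × ℤ → ℝ with (H_e')_{k,ℓ} = 0 unless k₁(ℓ) < k < k₂(ℓ), such that H_e = H_e' − U·H_o entrywise (all the sums involved being finite). -/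
/-- factorisation into lifting steps (primal case).  Given a
refinement matrix `H` (rows indexed by the first argument, columns by the
second) whose columns are supported on the rows `2k₁(ℓ), …, 2k₂(ℓ)` with
nonzero extreme odd entries, there exist a lower bidiagonal update matrix `U`
and an even matrix `He'` supported strictly inside the band, such that
`H_e = He' - U · H_o` entrywise, where `(H_e)_{k,ℓ} = H_{2k,ℓ}`,
`(H_o)_{k,ℓ} = H_{2k+1,ℓ}`, and the product with the bidiagonal `U` is the
finite sum `U_{k,k-1} (H_o)_{k-1,ℓ} + U_{k,k} (H_o)_{k,ℓ}`. -/
theorem lifting_factorisation_primal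
    (H : ℤ → ℤ → ℝ) (k₁ k₂ : ℤ → ℤ)
    (hk₁mono : StrictMono k₁) (hk₂mono : StrictMono k₂)
    (hk₁bij : Function.Bijective k₁) (hk₂bij : Function.Bijective k₂)
    (hlt : ∀ ℓ : ℤ, k₁ ℓ < k₂ ℓ)
    (hband : ∀ i ℓ : ℤ, (i < 2 * k₁ ℓ ∨ 2 * k₂ ℓ < i) → H i ℓ = 0)
    (hodd1 : ∀ ℓ : ℤ, H (2 * k₁ ℓ + 1) ℓ ≠ 0)
    (hodd2 : ∀ ℓ : ℤ, H (2 * k₂ ℓ - 1) ℓ ≠ 0) :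
    ∃ U He' : ℤ → ℤ → ℝ,
      (∀ k m : ℤ, m ≠ k - 1 → m ≠ k → U k m = 0) ∧
      (∀ k ℓ : ℤ, ¬(k₁ ℓ < k ∧ k < k₂ ℓ) → He' k ℓ = 0) ∧
      (∀ k ℓ : ℤ, H (2 * k) ℓ =
        He' k ℓ - (U k (k - 1) * H (2 * (k - 1) + 1) ℓ + U k k * H (2 * k + 1) ℓ)) := by
  classical
  set e₁ := Equiv.ofBijective k₁ hk₁bij with he₁
  set e₂ := Equiv.ofBijective k₂ hk₂bij with he₂
  have hk₁inv : ∀ k, k₁ (e₁.symm k) = k := fun k => e₁.apply_symm_apply k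
  have hk₂inv : ∀ k, k₂ (e₂.symm k) = k := fun k => e₂.apply_symm_apply k
  set U : ℤ → ℤ → ℝ := fun k m =>
    if m = k then -H (2 * k) (e₁.symm k) / H (2 * k + 1) (e₁.symm k)
    else if m = k - 1 then -H (2 * k) (e₂.symm k) / H (2 * k - 1) (e₂.symm k)
    else 0 with hU
  set He' : ℤ → ℤ → ℝ := fun k ℓ =>
    H (2 * k) ℓ + (U k (k - 1) * H (2 * (k - 1) + 1) ℓ + U k k * H (2 * k + 1) ℓ)
    with hHe'
  refine ⟨U, He', ?_, ?_, ?_⟩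
  · intro k m h1 h2
    simp [hU, h1, h2]
  · intro k ℓ h
    push_neg at h
    have hUkk : U k k = -H (2 * k) (e₁.symm k) / H (2 * k + 1) (e₁.symm k) := by
      simp [hU]
    have hUkk1 : U k (k - 1) = -H (2 * k) (e₂.symm k) / H (2 * k - 1) (e₂.symm k) := by
      have : (k : ℤ) - 1 ≠ k := by omega
      simp [hU, this]
    rcases lt_trichotomy k (k₁ ℓ) with hlt1 | heq1 | hgt1
    · have h0 : H (2 * k) ℓ = 0 := hband _ _ (Or.inl (by omega))
      have h1 : H (2 * (k - 1) + 1) ℓ = 0 := hband _ _ (Or.inl (by omega))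
      have h2 : H (2 * k + 1) ℓ = 0 := hband _ _ (Or.inl (by omega))
      simp [hHe', h0, h1, h2]
    · -- k = k₁ ℓ, boundary: cancellation via U k k; also k < k₂ ℓ so H(2k-1,ℓ)=0
      have hℓ : e₁.symm k = ℓ := by
        apply e₁.symm_apply_eq.mpr
        show k = k₁ ℓ
        exact heq1
      have h1 : H (2 * (k - 1) + 1) ℓ = 0 := hband _ _ (Or.inl (by omega))
      have hne : H (2 * k + 1) ℓ ≠ 0 := by
        have := hodd1 ℓ; rwa [← heq1] at this
      rw [hHe']
      simp only [hUkk, hUkk1, hℓ, h1]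
      field_simp
      ring
    · have hk2 : k₂ ℓ ≤ k := h hgt1
      rcases eq_or_lt_of_le hk2 with heq2 | hgt2
      · -- k = k₂ ℓ
        have hℓ : e₂.symm k = ℓ := by
          apply e₂.symm_apply_eq.mpr
          show k = k₂ ℓ
          exact heq2.symm
        have h2 : H (2 * k + 1) ℓ = 0 := hband _ _ (Or.inr (by omega))
        have hne : H (2 * k - 1) ℓ ≠ 0 := by
          have := hodd2 ℓ; rw [heq2] at this; exact this
        rw [hHe']
        have h21 : 2 * (k - 1) + 1 = 2 * k - 1 := by ring
        simp only [hUkk, hUkk1, hℓ, h2, h21]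
        field_simp
        ring
      · have h0 : H (2 * k) ℓ = 0 := hband _ _ (Or.inr (by omega))
        have h1 : H (2 * (k - 1) + 1) ℓ = 0 := hband _ _ (Or.inr (by omega))
        have h2 : H (2 * k + 1) ℓ = 0 := hband _ _ (Or.inr (by omega))
        simp [hHe', h0, h1, h2]
  · intro k ℓ
    simp [hHe']
end

section
/- Wavelet transform from a lifting factorisation: let n, n' be natural numbers, D an invertible real n × n matrix, U a real n × n' matrix and H_o a real n' × n matrix. Set P = H_o·D⁻¹ and H_e = D − U·H_o. Define the forward map F : ℝⁿ × ℝ^{n'} → ℝⁿ × ℝ^{n'} by F(s_e, s_o) = (s, d) with s = D⁻¹(s_e + U s_o) and d = s_o − P D s, and the inverse map I : ℝⁿ × ℝ^{n'} → ℝⁿ × ℝ^{n'} by I(s, d) = (s_e, s_o) with s_o = d + P D s and s_e = D s − U s_o. Then I ∘ F and F ∘ I are both the identity map, and for every s ∈ ℝⁿ one has I(s, 0) = (H_e s, H_o s); that is, the constructed transform has H with even block H_e and odd block H_o as its refinement matrix. -/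
open Matrix

/-- wavelet transform from a lifting factorisation.  With `D`
invertible (two-sided inverse `D'`), `P = H_o · D⁻¹` and `H_e = D - U · H_o`,
the forward map `F(s_e, s_o) = (s, d)` with `s = D⁻¹(s_e + U s_o)`,
`d = s_o - P D s`, and the inverse map `I(s, d) = (s_e, s_o)` with
`s_o = d + P D s`, `s_e = D s - U s_o`, are mutually inverse, and
`I(s, 0) = (H_e s, H_o s)`, i.e. the refinement matrix of the constructed
transform has even block `H_e` and odd block `H_o`. -/
theorem wavelet_transform_from_lifting
    (n n' : ℕ) (D D' : Matrix (Fin n) (Fin n) ℝ)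
    (hD : D * D' = 1) (hD' : D' * D = 1)
    (U : Matrix (Fin n) (Fin n') ℝ) (Ho : Matrix (Fin n') (Fin n) ℝ)
    (P : Matrix (Fin n') (Fin n) ℝ) (hP : P = Ho * D')
    (He : Matrix (Fin n) (Fin n) ℝ) (hHe : He = D - U * Ho)
    (F : (Fin n → ℝ) × (Fin n' → ℝ) → (Fin n → ℝ) × (Fin n' → ℝ))
    (hF : ∀ se : Fin n → ℝ, ∀ so : Fin n' → ℝ,
      F (se, so) = (D'.mulVec (se + U.mulVec so),
        so - (P * D).mulVec (D'.mulVec (se + U.mulVec so))))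
    (I : (Fin n → ℝ) × (Fin n' → ℝ) → (Fin n → ℝ) × (Fin n' → ℝ))
    (hI : ∀ s : Fin n → ℝ, ∀ d : Fin n' → ℝ,
      I (s, d) = (D.mulVec s - U.mulVec (d + (P * D).mulVec s),
        d + (P * D).mulVec s)) :
    (∀ v : (Fin n → ℝ) × (Fin n' → ℝ), I (F v) = v) ∧
    (∀ v : (Fin n → ℝ) × (Fin n' → ℝ), F (I v) = v) ∧
    (∀ s : Fin n → ℝ, I (s, 0) = (He.mulVec s, Ho.mulVec s)) := by
  subst hP hHe
  have hPD : Ho * D' * D = Ho := by rw [Matrix.mul_assoc, hD', Matrix.mul_one]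
  refine ⟨?_, ?_, ?_⟩
  · rintro ⟨se, so⟩
    rw [hF, hI, hPD]
    have h1 : so - Ho.mulVec (D'.mulVec (se + U.mulVec so)) +
        Ho.mulVec (D'.mulVec (se + U.mulVec so)) = so := by
      abel
    rw [h1]
    have h2 : D.mulVec (D'.mulVec (se + U.mulVec so)) = se + U.mulVec so := by
      rw [Matrix.mulVec_mulVec, hD, Matrix.one_mulVec]
    rw [h2]
    simp [Prod.ext_iff]
  · rintro ⟨s, d⟩
    rw [hI, hF, hPD]
    have h0 : D.mulVec s - U.mulVec (d + Ho.mulVec s) +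
        U.mulVec (d + Ho.mulVec s) = D.mulVec s := by abel
    rw [h0, Matrix.mulVec_mulVec, hD', Matrix.one_mulVec]
    simp [Prod.ext_iff]
  · intro s
    rw [hI, hPD]
    simp [Matrix.sub_mulVec, Matrix.mulVec_mulVec]
end

section
/- Lifting step for B-spline power coefficients: let p ≥ 3 be an integer and let t_0, t_1, …, t_p be real numbers with t_p ≠ t_0. For 0 ≤ q ≤ p−1 define a_q = e_q(t_1, …, t_{p−1})/C(p−1,q), b_q = e_q(t_0, …, t_{p−2})/C(p−1,q), c_q = e_q(t_2, …, t_p)/C(p−1,q), and m_q = e_q(t_0, t_2, t_3, …, t_{p−2}, t_p)/C(p−1,q) (the latter list consisting of t_0, t_p and the p−3 values t_2, …, t_{p−2}), where e_q denotes the elementary symmetric polynomial of degree q and C(p−1,q) the binomial coefficient. Define the lifting parameters L₋ = (t_p − t_{p−1})/(t_p − t_0) and L₊ = (t_1 − t_0)/(t_p − t_0). Then for every q ∈ {0, 1, …, p−1}: a_q − L₋·b_q − L₊·c_q = ((t_{p−1} − t_1)/(t_p − t_0)) · m_q. -/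
lemma esymm_zero' (s : Multiset ℝ) : s.esymm 0 = 1 := by
  simp [Multiset.esymm]

lemma esymm_cons' (x : ℝ) (s : Multiset ℝ) (n : ℕ) :
    (x ::ₘ s).esymm (n + 1) = s.esymm (n + 1) + x * s.esymm n := by
  rw [Multiset.esymm, Multiset.powersetCard_cons, Multiset.map_add, Multiset.sum_add,
    Multiset.map_map]
  congr 1
  simp [Function.comp_def, Multiset.esymm, Multiset.sum_map_mul_left]

lemma esymm_cc (x y : ℝ) (s : Multiset ℝ) (n : ℕ) :
    (x ::ₘ y ::ₘ s).esymm (n + 2) =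
      s.esymm (n + 2) + (x + y) * s.esymm (n + 1) + x * y * s.esymm n := by
  rw [esymm_cons', esymm_cons', esymm_cons']; ring

lemma esymm_cc1 (x y : ℝ) (s : Multiset ℝ) :
    (x ::ₘ y ::ₘ s).esymm 1 = s.esymm 1 + (x + y) := by
  simp only [esymm_cons', esymm_zero']; ring

lemma lift_key (t0 t1 tp1 tp e0 e1 e2 D : ℝ) (hd : tp - t0 ≠ 0) :
    (e2 + (t1 + tp1) * e1 + t1 * tp1 * e0) / D -
      ((tp - tp1) / (tp - t0)) * ((e2 + (t0 + t1) * e1 + t0 * t1 * e0) / D) -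
      ((t1 - t0) / (tp - t0)) * ((e2 + (tp1 + tp) * e1 + tp1 * tp * e0) / D) =
    ((tp1 - t1) / (tp - t0)) * ((e2 + (t0 + tp) * e1 + t0 * tp * e0) / D) := by
  have h : (e2 + (t1 + tp1) * e1 + t1 * tp1 * e0) -
      ((tp - tp1) / (tp - t0)) * (e2 + (t0 + t1) * e1 + t0 * t1 * e0) -
      ((t1 - t0) / (tp - t0)) * (e2 + (tp1 + tp) * e1 + tp1 * tp * e0) =
      ((tp1 - t1) / (tp - t0)) * (e2 + (t0 + tp) * e1 + t0 * tp * e0) := by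
    field_simp
    ring
  simp only [div_eq_mul_inv]
  linear_combination D⁻¹ * h

/-- lifting step for B-spline power coefficients
(Proposition 1 of the paper, with `k = 0`).  For knots `t 0, …, t p` with
`t p ≠ t 0`, the lifted power coefficient
`a_q - L₋ b_q - L₊ c_q` equals `((t_{p-1} - t_1)/(t_p - t_0)) m_q`
for every `q ∈ {0, …, p-1}`, where `a_q, b_q, c_q, m_q` are the normalised
elementary symmetric polynomials in the knot subsets
`{t_1,…,t_{p-1}}`, `{t_0,…,t_{p-2}}`, `{t_2,…,t_p}` and
`{t_0, t_2, …, t_{p-2}, t_p}` respectively, and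
`L₋ = (t_p - t_{p-1})/(t_p - t_0)`, `L₊ = (t_1 - t_0)/(t_p - t_0)`. -/
theorem bspline_powerCoef_lifting_step
    (p : ℕ) (hp : 3 ≤ p) (t : ℕ → ℝ) (hne : t p ≠ t 0)
    (q : ℕ) (hq : q ≤ p - 1) :
    (((Finset.Ico 1 p).val.map t).esymm q / (Nat.choose (p - 1) q) : ℝ) -
      ((t p - t (p - 1)) / (t p - t 0)) *
        (((Finset.Ico 0 (p - 1)).val.map t).esymm q / (Nat.choose (p - 1) q)) -
      ((t 1 - t 0) / (t p - t 0)) *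
        (((Finset.Icc 2 p).val.map t).esymm q / (Nat.choose (p - 1) q)) =
    ((t (p - 1) - t 1) / (t p - t 0)) *
      ((t 0 ::ₘ t p ::ₘ ((Finset.Icc 2 (p - 2)).val.map t)).esymm q /
        (Nat.choose (p - 1) q)) := by
  have hd : t p - t 0 ≠ 0 := sub_ne_zero.mpr hne
  set S : Multiset ℝ := (Finset.Icc 2 (p - 2)).val.map t with hS
  have h1 : ((Finset.Ico 1 p).val.map t) = t 1 ::ₘ t (p - 1) ::ₘ S := by
    have e : Finset.Ico 1 p = insert 1 (insert (p - 1) (Finset.Icc 2 (p - 2))) := by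
      ext x; simp only [Finset.mem_Ico, Finset.mem_insert, Finset.mem_Icc]; omega
    rw [e, Finset.insert_val_of_notMem
        (by simp only [Finset.mem_insert, Finset.mem_Icc]; omega),
      Finset.insert_val_of_notMem (by simp only [Finset.mem_Icc]; omega)]
    simp [hS]
  have h2 : ((Finset.Ico 0 (p - 1)).val.map t) = t 0 ::ₘ t 1 ::ₘ S := by
    have e : Finset.Ico 0 (p - 1) = insert 0 (insert 1 (Finset.Icc 2 (p - 2))) := by
      ext x; simp only [Finset.mem_Ico, Finset.mem_insert, Finset.mem_Icc]; omega
    rw [e, Finset.insert_val_of_notMem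
        (by simp only [Finset.mem_insert, Finset.mem_Icc]; omega),
      Finset.insert_val_of_notMem (by simp only [Finset.mem_Icc]; omega)]
    simp [hS]
  have h3 : ((Finset.Icc 2 p).val.map t) = t (p - 1) ::ₘ t p ::ₘ S := by
    have e : Finset.Icc 2 p = insert (p - 1) (insert p (Finset.Icc 2 (p - 2))) := by
      ext x; simp only [Finset.mem_Icc, Finset.mem_insert]; omega
    rw [e, Finset.insert_val_of_notMem
        (by simp only [Finset.mem_insert, Finset.mem_Icc]; omega),
      Finset.insert_val_of_notMem (by simp only [Finset.mem_Icc]; omega)]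
    simp [hS]
  rw [h1, h2, h3]
  match q with
  | 0 =>
    simp only [esymm_zero']
    linear_combination lift_key (t 0) (t 1) (t (p - 1)) (t p) 0 0 1
      ((p - 1).choose 0 : ℝ) hd
  | 1 =>
    simp only [esymm_cc1]
    linear_combination lift_key (t 0) (t 1) (t (p - 1)) (t p) 0 1 (S.esymm 1)
      ((p - 1).choose 1 : ℝ) hd
  | (n + 2) =>
    simp only [esymm_cc]
    linear_combination lift_key (t 0) (t 1) (t (p - 1)) (t p) (S.esymm n)
      (S.esymm (n + 1)) (S.esymm (n + 2)) ((p - 1).choose (n + 2) : ℝ) hd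
end

section
/- Final update step: let n, m, m' be natural numbers with m + m' = n, and let H, H̃ be real n × m matrices and G, G̃, G⁰ real n × m' matrices satisfying G̃ᵀ G⁰ = I_{m'} and H H̃ᵀ + G G̃ᵀ = I_n. Define the update matrix U = H̃ᵀ G⁰ (an m × m' matrix). Then G = G⁰ − H U. -/
open Matrix

/-- final update step: if `G̃ᵀ G⁰ = I` and the perfect
reconstruction property `H H̃ᵀ + G G̃ᵀ = I` holds, then with the update matrix
`U = H̃ᵀ G⁰` one has `G = G⁰ - H U`. -/
theorem final_update_step
    (n m m' : ℕ) (hmm : m + m' = n)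
    (H Ht : Matrix (Fin n) (Fin m) ℝ) (G Gt G0 : Matrix (Fin n) (Fin m') ℝ)
    (h1 : Gtᵀ * G0 = 1) (h2 : H * Htᵀ + G * Gtᵀ = 1) :
    G = G0 - H * (Htᵀ * G0) := by
  have : (H * Htᵀ + G * Gtᵀ) * G0 = (1 : Matrix (Fin n) (Fin n) ℝ) * G0 := by rw [h2]
  rw [Matrix.add_mul, Matrix.one_mul, Matrix.mul_assoc, Matrix.mul_assoc, h1, Matrix.mul_one] at this
  exact eq_sub_of_add_eq' this
end

section
/- Multiscale variance propagation bound: let n and m be natural numbers, W a real n × m matrix and W̃ a real m × n matrix with W̃ W = I_m, and set P = W W̃ (so P is idempotent of rank m). Then every nonzero singular value of P is at least 1; consequently the squared Frobenius norm satisfies ‖P‖_F² ≥ m, i.e., the multiscale variance propagation κ_F = ‖P‖_F / √m is at least 1, and κ_F = 1 holds if and only if P is symmetric, i.e., if and only if P is the orthogonal projection onto the column space of W. -/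
open Matrix

/-- multiscale variance propagation bound.  If `W̃ W = I_m` and
`P = W W̃`, then every nonzero singular value of `P` is at least `1` (stated
via the eigenvalues `μ` of `P Pᵀ`, whose square roots are the singular values:
any nonzero eigenvalue satisfies `μ ≥ 1`); consequently the squared Frobenius
norm `‖P‖_F² = ∑ᵢⱼ Pᵢⱼ²` is at least `m`, i.e. `κ_F = ‖P‖_F/√m ≥ 1`; and
`κ_F = 1` (i.e. `‖P‖_F² = m`) holds if and only if `P` is symmetric, i.e. `P`
is the orthogonal projection onto the column space of `W`. -/
theorem multiscale_variance_propagation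
    (n m : ℕ) (W : Matrix (Fin n) (Fin m) ℝ) (Wt : Matrix (Fin m) (Fin n) ℝ)
    (hWW : Wt * W = 1) :
    (∀ (μ : ℝ) (v : Fin n → ℝ), v ≠ 0 →
      ((W * Wt) * (W * Wt)ᵀ).mulVec v = μ • v → μ ≠ 0 → 1 ≤ μ) ∧
    ((m : ℝ) ≤ ∑ i, ∑ j, ((W * Wt) i j) ^ 2) ∧
    ((∑ i, ∑ j, ((W * Wt) i j) ^ 2 = (m : ℝ)) ↔ (W * Wt)ᵀ = W * Wt) := by
  set P := W * Wt with hP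
  have hPP : P * P = P := by
    rw [hP, Matrix.mul_assoc, ← Matrix.mul_assoc Wt, hWW, Matrix.one_mul]
  -- trace P = m
  have htr : ∑ i, ∑ j, P i j * P j i = (m : ℝ) := by
    have h1 : ∑ i, ∑ j, P i j * P j i = Matrix.trace (P * P) := by
      simp [Matrix.trace, Matrix.mul_apply, Matrix.diag]
    rw [h1, hPP, hP, Matrix.trace_mul_comm, hWW, Matrix.trace_one]
    simp
  have expand : ∑ i, ∑ j, (P i j - P j i) ^ 2
      = 2 * (∑ i, ∑ j, P i j ^ 2) - 2 * (m : ℝ) := by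
    have e1 : ∀ i j : Fin n, (P i j - P j i) ^ 2
        = P i j ^ 2 + P j i ^ 2 - 2 * (P i j * P j i) := by intro i j; ring
    have e2 : (∑ i, ∑ j, P j i ^ 2) = ∑ i, ∑ j, P i j ^ 2 := Finset.sum_comm
    calc ∑ i, ∑ j, (P i j - P j i) ^ 2
        = ∑ i, ∑ j, (P i j ^ 2 + P j i ^ 2 - 2 * (P i j * P j i)) := by
          simp only [e1]
      _ = (∑ i, ∑ j, P i j ^ 2) + (∑ i, ∑ j, P j i ^ 2)
            - 2 * ∑ i, ∑ j, P i j * P j i := by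
          simp [Finset.sum_add_distrib, Finset.sum_sub_distrib, Finset.mul_sum]
      _ = 2 * (∑ i, ∑ j, P i j ^ 2) - 2 * (m : ℝ) := by rw [e2, htr]; ring
  have hsq : (0:ℝ) ≤ ∑ i, ∑ j, (P i j - P j i) ^ 2 :=
    Finset.sum_nonneg fun i _ => Finset.sum_nonneg fun j _ => sq_nonneg _
  refine ⟨?_, by linarith, ?_, ?_⟩
  · intro μ v hv hA hμ
    have h2 : P *ᵥ (Pᵀ *ᵥ v) = μ • v := by
      rw [Matrix.mulVec_mulVec]; exact hA
    have h3 : v = P *ᵥ (μ⁻¹ • (Pᵀ *ᵥ v)) := by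
      rw [Matrix.mulVec_smul, h2, smul_smul, inv_mul_cancel₀ hμ, one_smul]
    have hPv : P *ᵥ v = v := by
      conv_lhs => rw [h3]
      rw [Matrix.mulVec_mulVec, hPP, ← h3]
    have h0 : v ⬝ᵥ v ≠ 0 := fun h => hv (dotProduct_self_eq_zero.mp h)
    have hnn : (0:ℝ) ≤ v ⬝ᵥ v := Finset.sum_nonneg fun i _ => mul_self_nonneg _
    have ht : (0:ℝ) < v ⬝ᵥ v := lt_of_le_of_ne hnn (Ne.symm h0)
    have huv : v ⬝ᵥ (Pᵀ *ᵥ v) = v ⬝ᵥ v := by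
      rw [Matrix.dotProduct_mulVec, Matrix.vecMul_transpose, hPv]
    have huu : (Pᵀ *ᵥ v) ⬝ᵥ (Pᵀ *ᵥ v) = μ * (v ⬝ᵥ v) := by
      rw [Matrix.dotProduct_mulVec, Matrix.vecMul_transpose, h2,
        smul_dotProduct, smul_eq_mul]
    have hcs : (v ⬝ᵥ (Pᵀ *ᵥ v)) ^ 2 ≤ (v ⬝ᵥ v) * ((Pᵀ *ᵥ v) ⬝ᵥ (Pᵀ *ᵥ v)) := by
      have := Finset.sum_mul_sq_le_sq_mul_sq Finset.univ v (Pᵀ *ᵥ v)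
      simpa [dotProduct, sq, Finset.mul_sum] using this
    rw [huv, huu] at hcs
    nlinarith [ht, hcs, mul_pos ht ht]
  · intro h
    have hz : ∑ i, ∑ j, (P i j - P j i) ^ 2 = 0 := by linarith
    ext i j
    have h1 : ∀ i ∈ Finset.univ, (0:ℝ) ≤ ∑ j, (P i j - P j i) ^ 2 :=
      fun i _ => Finset.sum_nonneg fun j _ => sq_nonneg _
    have h2 := (Finset.sum_eq_zero_iff_of_nonneg h1).mp hz i (Finset.mem_univ i)
    have h3 := (Finset.sum_eq_zero_iff_of_nonneg
      (fun j _ => sq_nonneg (P i j - P j i))).mp h2 j (Finset.mem_univ j)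
    have : P i j - P j i = 0 := by
      exact pow_eq_zero_iff (by norm_num) |>.mp h3
    simp [Matrix.transpose_apply]
    linarith
  · intro h
    have hz : ∑ i, ∑ j, (P i j - P j i) ^ 2 = 0 := by
      apply Finset.sum_eq_zero; intro i _
      apply Finset.sum_eq_zero; intro j _
      have : P j i = P i j := by
        have := congrFun (congrFun h i) j
        simpa [Matrix.transpose_apply] using this
      rw [this]; ring
    linarith
end

section
/- Componentwise variance comparison with the orthogonal projection: let n and m be natural numbers, W a real n × m matrix with Wᵀ W invertible, and W̃ a real m × n matrix with W̃ W = I_m. Set P = W W̃ and P⊥ = W (Wᵀ W)⁻¹ Wᵀ. Then every diagonal entry of P Pᵀ − P⊥ P⊥ᵀ is nonnegative; that is, for each i ∈ {1, …, n}, (P Pᵀ)_{ii} ≥ (P⊥ P⊥ᵀ)_{ii}. (Interpreted statistically: for uncorrelated homoscedastic noise ε, the componentwise variance of P ε is at least that of the orthogonal projection P⊥ ε.) -/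
open Matrix

/-- componentwise variance comparison with the orthogonal
projection.  With `W̃ W = I_m`, `P = W W̃` and the orthogonal projection
`P⊥ = W (Wᵀ W)⁻¹ Wᵀ`, every diagonal entry of `P Pᵀ - P⊥ P⊥ᵀ` is nonnegative:
`(P⊥ P⊥ᵀ)ᵢᵢ ≤ (P Pᵀ)ᵢᵢ` for every `i`. -/
theorem variance_comparison_orthogonal_projection
    (n m : ℕ) (W : Matrix (Fin n) (Fin m) ℝ) (Wt : Matrix (Fin m) (Fin n) ℝ)
    (hinv : IsUnit (Wᵀ * W)) (hWW : Wt * W = 1) :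
    ∀ i : Fin n,
      ((W * (Wᵀ * W)⁻¹ * Wᵀ) * (W * (Wᵀ * W)⁻¹ * Wᵀ)ᵀ) i i ≤
        ((W * Wt) * (W * Wt)ᵀ) i i := by
  intro i
  have hdet : IsUnit (Wᵀ * W).det := (Matrix.isUnit_iff_isUnit_det _).mp hinv
  set G := (Wᵀ * W)⁻¹ with hG
  have hGinv' : G * (Wᵀ * W) = 1 := Matrix.nonsing_inv_mul _ hdet
  have hGt : Gᵀ = G := by
    rw [hG, Matrix.transpose_nonsing_inv, Matrix.transpose_mul,
      Matrix.transpose_transpose]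
  set Q := W * G * Wᵀ with hQ
  set P := W * Wt with hP
  have hQt : Qᵀ = Q := by
    rw [hQ, Matrix.transpose_mul, Matrix.transpose_mul, Matrix.transpose_transpose,
      hGt, Matrix.mul_assoc]
  have hPQ : P * Q = Q := by
    have h1 : P * Q = W * (Wt * W) * (G * Wᵀ) := by
      rw [hP, hQ]; simp only [Matrix.mul_assoc]
    rw [h1, hWW, Matrix.mul_one, hQ, Matrix.mul_assoc]
  have hQQ : Q * Q = Q := by
    have h1 : Q * Q = W * (G * (Wᵀ * W)) * (G * Wᵀ) := by
      rw [hQ]; simp only [Matrix.mul_assoc]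
    rw [h1, hGinv', Matrix.mul_one, hQ, Matrix.mul_assoc]
  have hQP : Q * Pᵀ = Q := by
    have h := congrArg Matrix.transpose hPQ
    rw [Matrix.transpose_mul, hQt] at h
    exact h
  have key : P * Pᵀ - Q * Qᵀ = (P - Q) * (P - Q)ᵀ := by
    have expand : (P - Q) * (P - Q)ᵀ = P * Pᵀ - P * Qᵀ - Q * Pᵀ + Q * Qᵀ := by
      rw [Matrix.transpose_sub]; noncomm_ring
    rw [expand, hQt, hPQ, hQP, hQQ]
    abel
  have hnn : 0 ≤ ((P - Q) * (P - Q)ᵀ) i i := by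
    rw [Matrix.mul_apply]
    apply Finset.sum_nonneg
    intro j _
    rw [Matrix.transpose_apply]
    exact mul_self_nonneg _
  have hdiff : 0 ≤ (P * Pᵀ - Q * Qᵀ) i i := by rw [key]; exact hnn
  have := hdiff
  rw [Matrix.sub_apply, sub_nonneg] at this
  simpa [hP, hQ] using this
end
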